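/- Let x and y be distinct finite-support lotteries over ℝ, let u : ℝ → ℝ be strictly increasing, and let H : [0,1] → ℝ be continuous and strictly increasing with H(0) = 0. Then the maximum over couplings g ∈ Γ(x,y) of H( |Σ_{w_x,w_y} g(w_x,w_y)·(u(w_x) − u(w_y))| / Σ_{w_x,w_y} g(w_x,w_y)·|u(w_x) − u(w_y)| ) is attained and equals H( |EU(x) − EU(y)| / d_CDF(x,y) ). -/

import Mathlib

open Finset

/-- A finite-support lottery over ℝ. -/
structure Lottery where
  f : ℝ →₀ ℝ
  nonneg : ∀ w, 0 ≤ f w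
  sum_one : f.sum (fun _ p => p) = 1

namespace Lottery

/-- The CDF of a lottery. -/
noncomputable def cdf (x : Lottery) (w : ℝ) : ℝ :=
  ∑ w' ∈ x.f.support.filter (fun w' => w' ≤ w), x.f w'

/-- The quantile function of a lottery. -/
noncomputable def quantile (x : Lottery) (q : ℝ) : ℝ :=
  sInf {w : ℝ | q ≤ x.cdf w}

/-- Expected utility. -/
noncomputable def EU (u : ℝ → ℝ) (x : Lottery) : ℝ :=
  x.f.sum (fun w p => p * u w)

/-- The CDF distance d_CDF. -/
noncomputable def dCDF (u : ℝ → ℝ) (x y : Lottery) : ℝ :=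
  ∫ q in (0:ℝ)..1, |u (x.quantile q) - u (y.quantile q)|

/-- First-order stochastic dominance. -/
def FOSD (x y : Lottery) : Prop := ∀ w, x.cdf w ≤ y.cdf w

/-- The topology of weak convergence of the associated probability measures:
the topology induced by testing against bounded continuous functions. -/
instance : TopologicalSpace Lottery :=
  TopologicalSpace.induced
    (fun x => fun g : BoundedContinuousFunction ℝ ℝ => x.f.sum (fun w p => p * g w))
    inferInstance

end Lottery

/-- Γ(x,y): the set of couplings of two lotteries. -/
def IsCoupling (x y : Lottery) (g : (ℝ × ℝ) →₀ ℝ) : Prop :=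
  (∀ p, 0 ≤ g p ∧ g p ≤ 1) ∧
  (∀ w : ℝ, (g.sum fun p v => if p.1 = w then v else 0) = x.f w) ∧
  (∀ w : ℝ, (g.sum fun p v => if p.2 = w then v else 0) = y.f w)

/-- The ease-of-comparison value of the attribute representation induced by a coupling. -/
noncomputable def couplingVal (H u : ℝ → ℝ) (g : (ℝ × ℝ) →₀ ℝ) : ℝ :=
  H (|g.sum fun p v => v * (u p.1 - u p.2)| / g.sum fun p v => v * |u p.1 - u p.2|)

namespace StmtNineAux

open Lottery MeasureTheory

noncomputable def cdfLt (x : Lottery) (w : ℝ) : ℝ :=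
  ∑ w' ∈ x.f.support.filter (fun w' => w' < w), x.f w'

lemma cdf_nonneg (x : Lottery) (w : ℝ) : 0 ≤ x.cdf w :=
  Finset.sum_nonneg fun w' _ => x.nonneg w'

lemma cdfLt_nonneg (x : Lottery) (w : ℝ) : 0 ≤ cdfLt x w :=
  Finset.sum_nonneg fun w' _ => x.nonneg w'

lemma cdf_le_one (x : Lottery) (w : ℝ) : x.cdf w ≤ 1 := by
  have h : x.cdf w ≤ ∑ w' ∈ x.f.support, x.f w' :=
    Finset.sum_le_sum_of_subset_of_nonneg (Finset.filter_subset _ _)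
      (fun i _ _ => x.nonneg i)
  have h2 : ∑ w' ∈ x.f.support, x.f w' = 1 := x.sum_one
  linarith

lemma cdf_eq_cdfLt_add (x : Lottery) (w : ℝ) : x.cdf w = cdfLt x w + x.f w := by
  by_cases hw : w ∈ x.f.support
  · have hsplit : x.f.support.filter (fun w' => w' ≤ w) =
        insert w (x.f.support.filter (fun w' => w' < w)) := by
      ext v
      simp only [Finset.mem_filter, Finset.mem_insert]
      constructor
      · rintro ⟨hv, hle⟩
        rcases eq_or_lt_of_le hle with h | h
        · exact Or.inl h
        · exact Or.inr ⟨hv, h⟩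
      · rintro (rfl | ⟨hv, hlt⟩)
        · exact ⟨hw, le_refl _⟩
        · exact ⟨hv, le_of_lt hlt⟩
    have hnotmem : w ∉ x.f.support.filter (fun w' => w' < w) := by
      simp [Finset.mem_filter]
    rw [Lottery.cdf, hsplit, Finset.sum_insert hnotmem, cdfLt]
    ring
  · have hf : x.f w = 0 := Finsupp.notMem_support_iff.mp hw
    have hsets : x.f.support.filter (fun w' => w' ≤ w) =
        x.f.support.filter (fun w' => w' < w) := by
      ext v
      simp only [Finset.mem_filter]
      constructor
      · rintro ⟨hv, hle⟩
        refine ⟨hv, lt_of_le_of_ne hle ?_⟩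
        rintro rfl; exact hw hv
      · rintro ⟨hv, hlt⟩; exact ⟨hv, le_of_lt hlt⟩
    rw [Lottery.cdf, hsets, hf, cdfLt]
    ring

lemma cdfLt_le_cdf (x : Lottery) (w : ℝ) : cdfLt x w ≤ x.cdf w := by
  rw [cdf_eq_cdfLt_add]
  have := x.nonneg w; linarith

lemma cdf_mono (x : Lottery) {w v : ℝ} (h : w ≤ v) : x.cdf w ≤ x.cdf v := by
  apply Finset.sum_le_sum_of_subset_of_nonneg
  · intro a ha
    simp only [Finset.mem_filter] at ha ⊢
    exact ⟨ha.1, le_trans ha.2 h⟩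
  · exact fun i _ _ => x.nonneg i

lemma cdf_le_cdfLt (x : Lottery) {w v : ℝ} (h : w < v) : x.cdf w ≤ cdfLt x v := by
  apply Finset.sum_le_sum_of_subset_of_nonneg
  · intro a ha
    simp only [Finset.mem_filter] at ha ⊢
    exact ⟨ha.1, lt_of_le_of_lt ha.2 h⟩
  · exact fun i _ _ => x.nonneg i

lemma cdfLt_lt_one_lt (x : Lottery) {w v : ℝ} (h : w < v) : cdfLt x w ≤ cdfLt x v := by
  apply Finset.sum_le_sum_of_subset_of_nonneg
  · intro a ha
    simp only [Finset.mem_filter] at ha ⊢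
    exact ⟨ha.1, lt_trans ha.2 h⟩
  · exact fun i _ _ => x.nonneg i

lemma support_nonempty (x : Lottery) : x.f.support.Nonempty := by
  by_contra h
  rw [Finset.not_nonempty_iff_eq_empty] at h
  have := x.sum_one
  rw [Finsupp.sum, h, Finset.sum_empty] at this
  norm_num at this

lemma quantile_eq (x : Lottery) {w q : ℝ} (hw : w ∈ x.f.support)
    (h1 : cdfLt x w < q) (h2 : q ≤ x.cdf w) : x.quantile q = w := by
  have hlb : ∀ v ∈ {v : ℝ | q ≤ x.cdf v}, w ≤ v := by
    intro v hv
    by_contra hvw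
    push_neg at hvw
    have : x.cdf v ≤ cdfLt x w := cdf_le_cdfLt x hvw
    have hqv : q ≤ x.cdf v := hv
    linarith
  have hwmem : w ∈ {v : ℝ | q ≤ x.cdf v} := h2
  exact le_antisymm (csInf_le ⟨w, hlb⟩ hwmem) (le_csInf ⟨w, hwmem⟩ hlb)

lemma cdf_max' (x : Lottery) (hne : x.f.support.Nonempty) :
    x.cdf (x.f.support.max' hne) = 1 := by
  have : x.f.support.filter (fun w' => w' ≤ x.f.support.max' hne) = x.f.support := by
    apply Finset.filter_true_of_mem
    intro a ha; exact Finset.le_max' _ a ha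
  rw [Lottery.cdf, this]
  exact x.sum_one

lemma cover (x : Lottery) {q : ℝ} (hq0 : 0 < q) (hq1 : q ≤ 1) :
    ∃ a ∈ x.f.support, cdfLt x a < q ∧ q ≤ x.cdf a := by
  classical
  have hne := support_nonempty x
  set s' := x.f.support.filter (fun a => q ≤ x.cdf a) with hs'
  have hs'ne : s'.Nonempty := by
    refine ⟨x.f.support.max' hne, ?_⟩
    rw [hs', Finset.mem_filter]
    exact ⟨Finset.max'_mem _ _, by rw [cdf_max']; exact hq1⟩
  set a := s'.min' hs'ne with ha
  have hamem : a ∈ s' := Finset.min'_mem _ _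
  rw [hs', Finset.mem_filter] at hamem
  refine ⟨a, hamem.1, ?_, hamem.2⟩
  by_contra hcon
  push_neg at hcon
  -- q ≤ cdfLt x a, so cdfLt x a > 0, so there is an element below a
  have hpos : 0 < cdfLt x a := lt_of_lt_of_le hq0 hcon
  have hfne : (x.f.support.filter (fun w' => w' < a)).Nonempty := by
    by_contra hfe
    rw [Finset.not_nonempty_iff_eq_empty] at hfe
    rw [cdfLt, hfe, Finset.sum_empty] at hpos
    exact lt_irrefl _ hpos
  set a' := (x.f.support.filter (fun w' => w' < a)).max' hfne with ha'
  have ha'mem : a' ∈ x.f.support.filter (fun w' => w' < a) := Finset.max'_mem _ _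
  rw [Finset.mem_filter] at ha'mem
  have hcdfa' : x.cdf a' = cdfLt x a := by
    rw [Lottery.cdf, cdfLt]
    congr 1
    ext v
    simp only [Finset.mem_filter]
    constructor
    · rintro ⟨hv, hle⟩; exact ⟨hv, lt_of_le_of_lt hle ha'mem.2⟩
    · rintro ⟨hv, hlt⟩
      refine ⟨hv, Finset.le_max' (x.f.support.filter (fun w' => w' < a)) v ?_⟩
      exact Finset.mem_filter.mpr ⟨hv, hlt⟩
  have ha's' : a' ∈ s' := by
    rw [hs', Finset.mem_filter]
    exact ⟨ha'mem.1, by rw [hcdfa']; exact hcon⟩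
  have := Finset.min'_le s' a' ha's'
  rw [← ha] at this
  exact absurd (lt_of_lt_of_le ha'mem.2 this) (lt_irrefl a')

end StmtNineAux
namespace StmtNineAux

lemma marginal_fst {x y : Lottery} {g : (ℝ × ℝ) →₀ ℝ} (hg : IsCoupling x y g)
    (φ : ℝ → ℝ) : (g.sum fun p v => v * φ p.1) = x.f.sum (fun w v => v * φ w) := by
  classical
  have hmarg : ∀ w : ℝ, (∑ p ∈ g.support.filter (fun p => p.1 = w), g p) = x.f w := by
    intro w
    have := hg.2.1 w
    rw [Finsupp.sum] at this
    rw [← this, Finset.sum_filter]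
  set A := g.support.image Prod.fst with hA
  have hmap : ∀ p ∈ g.support, p.1 ∈ A := fun p hp => Finset.mem_image_of_mem _ hp
  have step1 : (g.sum fun p v => v * φ p.1) =
      ∑ w ∈ A, ∑ p ∈ g.support.filter (fun p => p.1 = w), g p * φ p.1 := by
    rw [Finsupp.sum, Finset.sum_fiberwise_of_maps_to hmap]
  have step2 : ∀ w ∈ A, (∑ p ∈ g.support.filter (fun p => p.1 = w), g p * φ p.1)
      = x.f w * φ w := by
    intro w _
    have : ∀ p ∈ g.support.filter (fun p => p.1 = w), g p * φ p.1 = g p * φ w := by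
      intro p hp
      rw [(Finset.mem_filter.mp hp).2]
    rw [Finset.sum_congr rfl this, ← Finset.sum_mul, hmarg w]
  rw [step1, Finset.sum_congr rfl step2]
  -- now compare ∑ w ∈ A, x.f w * φ w with ∑ w ∈ x.f.support, x.f w * φ w
  have hsub1 : ∑ w ∈ A, x.f w * φ w = ∑ w ∈ A ∪ x.f.support, x.f w * φ w := by
    apply Finset.sum_subset Finset.subset_union_left
    intro w hwu hwA
    have : x.f w = 0 := by
      rw [← hmarg w]
      apply Finset.sum_eq_zero
      intro p hp
      exfalso
      exact hwA (by rw [← (Finset.mem_filter.mp hp).2]; exact hmap p (Finset.mem_filter.mp hp).1)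
    rw [this, zero_mul]
  have hsub2 : ∑ w ∈ x.f.support, x.f w * φ w = ∑ w ∈ A ∪ x.f.support, x.f w * φ w := by
    apply Finset.sum_subset Finset.subset_union_right
    intro w _ hwS
    rw [Finsupp.notMem_support_iff.mp hwS, zero_mul]
  rw [hsub1, ← hsub2, Finsupp.sum]

lemma marginal_snd {x y : Lottery} {g : (ℝ × ℝ) →₀ ℝ} (hg : IsCoupling x y g)
    (φ : ℝ → ℝ) : (g.sum fun p v => v * φ p.2) = y.f.sum (fun w v => v * φ w) := by
  classical
  have hmarg : ∀ w : ℝ, (∑ p ∈ g.support.filter (fun p => p.2 = w), g p) = y.f w := by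
    intro w
    have := hg.2.2 w
    rw [Finsupp.sum] at this
    rw [← this, Finset.sum_filter]
  set A := g.support.image Prod.snd with hA
  have hmap : ∀ p ∈ g.support, p.2 ∈ A := fun p hp => Finset.mem_image_of_mem _ hp
  have step1 : (g.sum fun p v => v * φ p.2) =
      ∑ w ∈ A, ∑ p ∈ g.support.filter (fun p => p.2 = w), g p * φ p.2 := by
    rw [Finsupp.sum, Finset.sum_fiberwise_of_maps_to hmap]
  have step2 : ∀ w ∈ A, (∑ p ∈ g.support.filter (fun p => p.2 = w), g p * φ p.2)
      = y.f w * φ w := by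
    intro w _
    have : ∀ p ∈ g.support.filter (fun p => p.2 = w), g p * φ p.2 = g p * φ w := by
      intro p hp
      rw [(Finset.mem_filter.mp hp).2]
    rw [Finset.sum_congr rfl this, ← Finset.sum_mul, hmarg w]
  rw [step1, Finset.sum_congr rfl step2]
  have hsub1 : ∑ w ∈ A, y.f w * φ w = ∑ w ∈ A ∪ y.f.support, y.f w * φ w := by
    apply Finset.sum_subset Finset.subset_union_left
    intro w hwu hwA
    have : y.f w = 0 := by
      rw [← hmarg w]
      apply Finset.sum_eq_zero
      intro p hp
      exfalso
      exact hwA (by rw [← (Finset.mem_filter.mp hp).2]; exact hmap p (Finset.mem_filter.mp hp).1)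
    rw [this, zero_mul]
  have hsub2 : ∑ w ∈ y.f.support, y.f w * φ w = ∑ w ∈ A ∪ y.f.support, y.f w * φ w := by
    apply Finset.sum_subset Finset.subset_union_right
    intro w _ hwS
    rw [Finsupp.notMem_support_iff.mp hwS, zero_mul]
  rw [hsub1, ← hsub2, Finsupp.sum]

lemma coupling_num {x y : Lottery} {g : (ℝ × ℝ) →₀ ℝ} (hg : IsCoupling x y g)
    (u : ℝ → ℝ) :
    (g.sum fun p v => v * (u p.1 - u p.2)) = Lottery.EU u x - Lottery.EU u y := by
  have hsplit : (g.sum fun p v => v * (u p.1 - u p.2)) =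
      (g.sum fun p v => v * u p.1) - (g.sum fun p v => v * u p.2) := by
    rw [Finsupp.sum, Finsupp.sum, Finsupp.sum, ← Finset.sum_sub_distrib]
    apply Finset.sum_congr rfl
    intro p _; ring
  rw [hsplit, marginal_fst hg u, marginal_snd hg u]
  rfl

lemma num_le_denom {g : (ℝ × ℝ) →₀ ℝ} (hpos : ∀ p, 0 ≤ g p) (u : ℝ → ℝ) :
    |g.sum fun p v => v * (u p.1 - u p.2)| ≤ g.sum fun p v => v * |u p.1 - u p.2| := by
  rw [Finsupp.sum, Finsupp.sum]
  refine le_trans (Finset.abs_sum_le_sum_abs _ _) ?_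
  apply Finset.sum_le_sum
  intro p _
  rw [abs_mul, abs_of_nonneg (hpos p)]

end StmtNineAux
namespace StmtNineAux

lemma clamp_pos {l v d e : ℝ} (hlu : l ≤ v) (hde : d ≤ e) :
    max 0 (min v e - max l d) = min v (max l e) - min v (max l d) := by
  rcases le_total e l with h1 | h1 <;> rcases le_total d v with h2 | h2 <;>
    rcases le_total e v with h3 | h3 <;> rcases le_total d l with h4 | h4 <;>
    simp only [min_def, max_def] <;> split_ifs <;> linarith

lemma telescope (h : ℝ → ℝ) (f : ℝ → ℝ) (s : Finset ℝ) :
    ∑ b ∈ s, (h (∑ b' ∈ s.filter (fun b' => b' ≤ b), f b')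
      - h (∑ b' ∈ s.filter (fun b' => b' < b), f b'))
      = h (∑ b' ∈ s, f b') - h 0 := by
  classical
  induction s using Finset.induction_on_max with
  | empty => simp
  | insert a s ha ih =>
    have hanot : a ∉ s := fun hmem => lt_irrefl a (ha a hmem)
    have h1 : (insert a s).filter (fun b' => b' ≤ a) = insert a s :=
      Finset.filter_true_of_mem (by
        intro z hz
        rcases Finset.mem_insert.mp hz with rfl | hz
        · exact le_refl _
        · exact le_of_lt (ha z hz))
    have h2 : (insert a s).filter (fun b' => b' < a) = s := by
      ext z
      simp only [Finset.mem_filter, Finset.mem_insert]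
      constructor
      · rintro ⟨(rfl | hz), hlt⟩
        · exact absurd hlt (lt_irrefl _)
        · exact hz
      · intro hz; exact ⟨Or.inr hz, ha z hz⟩
    have h3 : ∀ b ∈ s, (insert a s).filter (fun b' => b' ≤ b)
        = s.filter (fun b' => b' ≤ b) := by
      intro b hb
      rw [Finset.filter_insert, if_neg (not_le.mpr (ha b hb))]
    have h4 : ∀ b ∈ s, (insert a s).filter (fun b' => b' < b)
        = s.filter (fun b' => b' < b) := by
      intro b hb
      rw [Finset.filter_insert, if_neg (not_lt.mpr (le_of_lt (ha b hb)))]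
    rw [Finset.sum_insert hanot, h1, h2]
    have hcong : ∑ b ∈ s, (h (∑ b' ∈ (insert a s).filter (fun b' => b' ≤ b), f b')
        - h (∑ b' ∈ (insert a s).filter (fun b' => b' < b), f b'))
        = ∑ b ∈ s, (h (∑ b' ∈ s.filter (fun b' => b' ≤ b), f b')
        - h (∑ b' ∈ s.filter (fun b' => b' < b), f b')) :=
      Finset.sum_congr rfl (fun b hb => by rw [h3 b hb, h4 b hb])
    rw [hcong, ih]
    ring

/-- The comonotone (quantile) coupling. -/
noncomputable def como (x y : Lottery) : (ℝ × ℝ) →₀ ℝ :=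
  Finsupp.onFinset (x.f.support ×ˢ y.f.support)
    (fun p => max 0 (min (x.cdf p.1) (y.cdf p.2) - max (cdfLt x p.1) (cdfLt y p.2)))
    (by
      intro p hp
      rw [Finset.mem_product]
      constructor
      · by_contra h
        have hf : x.f p.1 = 0 := Finsupp.notMem_support_iff.mp h
        have : x.cdf p.1 = cdfLt x p.1 := by rw [cdf_eq_cdfLt_add, hf, add_zero]
        apply hp
        have hle : min (x.cdf p.1) (y.cdf p.2) ≤ max (cdfLt x p.1) (cdfLt y p.2) := by
          calc min (x.cdf p.1) (y.cdf p.2) ≤ x.cdf p.1 := min_le_left _ _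
            _ = cdfLt x p.1 := this
            _ ≤ _ := le_max_left _ _
        simp only [max_eq_left (by linarith : min (x.cdf p.1) (y.cdf p.2)
          - max (cdfLt x p.1) (cdfLt y p.2) ≤ 0)]
      · by_contra h
        have hf : y.f p.2 = 0 := Finsupp.notMem_support_iff.mp h
        have : y.cdf p.2 = cdfLt y p.2 := by rw [cdf_eq_cdfLt_add, hf, add_zero]
        apply hp
        have hle : min (x.cdf p.1) (y.cdf p.2) ≤ max (cdfLt x p.1) (cdfLt y p.2) := by
          calc min (x.cdf p.1) (y.cdf p.2) ≤ y.cdf p.2 := min_le_right _ _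
            _ = cdfLt y p.2 := this
            _ ≤ _ := le_max_right _ _
        simp only [max_eq_left (by linarith : min (x.cdf p.1) (y.cdf p.2)
          - max (cdfLt x p.1) (cdfLt y p.2) ≤ 0)])

lemma como_apply (x y : Lottery) (p : ℝ × ℝ) :
    como x y p = max 0 (min (x.cdf p.1) (y.cdf p.2) - max (cdfLt x p.1) (cdfLt y p.2)) :=
  rfl

lemma como_nonneg (x y : Lottery) (p : ℝ × ℝ) : 0 ≤ como x y p := le_max_left _ _

lemma como_isCoupling (x y : Lottery) : IsCoupling x y (como x y) := by
  classical
  refine ⟨?_, ?_, ?_⟩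
  · intro p
    refine ⟨como_nonneg x y p, ?_⟩
    rw [como_apply]
    have h1 : min (x.cdf p.1) (y.cdf p.2) ≤ 1 :=
      le_trans (min_le_left _ _) (cdf_le_one x p.1)
    have h2 : 0 ≤ max (cdfLt x p.1) (cdfLt y p.2) :=
      le_trans (cdfLt_nonneg x p.1) (le_max_left _ _)
    rw [max_le_iff]
    constructor <;> linarith
  · -- first marginal
    intro w
    rw [como, Finsupp.onFinset_sum _ (fun _ => by simp), Finset.sum_product]
    have hterm : ∀ a ∈ x.f.support,
        (∑ b ∈ y.f.support, if (a, b).1 = w then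
          max 0 (min (x.cdf a) (y.cdf b) - max (cdfLt x a) (cdfLt y b)) else 0)
        = if a = w then
          (∑ b ∈ y.f.support,
            max 0 (min (x.cdf a) (y.cdf b) - max (cdfLt x a) (cdfLt y b))) else 0 := by
      intro a _
      by_cases haw : a = w
      · simp [haw]
      · simp [haw]
    rw [Finset.sum_congr rfl hterm, Finset.sum_ite_eq' x.f.support w]
    by_cases hw : w ∈ x.f.support
    · rw [if_pos hw]
      set l := cdfLt x w with hl
      set v := x.cdf w with hv
      have hlv : l ≤ v := cdfLt_le_cdf x w
      have hsum : ∀ b ∈ y.f.support,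
          max 0 (min v (y.cdf b) - max l (cdfLt y b))
          = (fun t => min v (max l t)) (y.cdf b) - (fun t => min v (max l t)) (cdfLt y b) := by
        intro b _
        exact clamp_pos hlv (cdfLt_le_cdf y b)
      rw [Finset.sum_congr rfl hsum]
      have hysum : ∑ b' ∈ y.f.support, y.f b' = 1 := y.sum_one
      -- the telescope sums match cdf/cdfLt of y
      have hmatch : ∑ b ∈ y.f.support,
          ((fun t => min v (max l t)) (y.cdf b) - (fun t => min v (max l t)) (cdfLt y b))
          = (fun t => min v (max l t)) (∑ b' ∈ y.f.support, y.f b')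
            - (fun t => min v (max l t)) 0 := by
        have := telescope (fun t => min v (max l t)) y.f (y.f.support)
        simpa [Lottery.cdf, cdfLt] using this
      rw [hmatch, hysum]
      clear hsum hterm
      have h0l : 0 ≤ l := cdfLt_nonneg x w
      have hv1 : v ≤ 1 := cdf_le_one x w
      have e1 : max l 1 = 1 := max_eq_right (by linarith)
      have e2 : max l 0 = l := max_eq_left h0l
      simp only [e1, e2]
      rw [min_eq_left hv1, min_eq_right hlv]
      rw [hv, cdf_eq_cdfLt_add x w, hl]
      ring
    · rw [if_neg hw]
      exact (Finsupp.notMem_support_iff.mp hw).symm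
  · -- second marginal
    intro w
    rw [como, Finsupp.onFinset_sum _ (fun _ => by simp), Finset.sum_product_right]
    have hterm : ∀ b ∈ y.f.support,
        (∑ a ∈ x.f.support, if (a, b).2 = w then
          max 0 (min (x.cdf a) (y.cdf b) - max (cdfLt x a) (cdfLt y b)) else 0)
        = if b = w then
          (∑ a ∈ x.f.support,
            max 0 (min (x.cdf a) (y.cdf b) - max (cdfLt x a) (cdfLt y b))) else 0 := by
      intro b _
      by_cases hbw : b = w
      · simp [hbw]
      · simp [hbw]
    rw [Finset.sum_congr rfl hterm, Finset.sum_ite_eq' y.f.support w]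
    by_cases hw : w ∈ y.f.support
    · rw [if_pos hw]
      set l := cdfLt y w with hl
      set v := y.cdf w with hv
      have hlv : l ≤ v := cdfLt_le_cdf y w
      have hsum : ∀ a ∈ x.f.support,
          max 0 (min (x.cdf a) v - max (cdfLt x a) l)
          = (fun t => min v (max l t)) (x.cdf a) - (fun t => min v (max l t)) (cdfLt x a) := by
        intro a _
        rw [min_comm (x.cdf a) v, max_comm (cdfLt x a) l]
        exact clamp_pos hlv (cdfLt_le_cdf x a)
      rw [Finset.sum_congr rfl hsum]
      have hxsum : ∑ a' ∈ x.f.support, x.f a' = 1 := x.sum_one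
      have hmatch : ∑ a ∈ x.f.support,
          ((fun t => min v (max l t)) (x.cdf a) - (fun t => min v (max l t)) (cdfLt x a))
          = (fun t => min v (max l t)) (∑ a' ∈ x.f.support, x.f a')
            - (fun t => min v (max l t)) 0 := by
        have := telescope (fun t => min v (max l t)) x.f (x.f.support)
        simpa [Lottery.cdf, cdfLt] using this
      rw [hmatch, hxsum]
      have h0l : 0 ≤ l := cdfLt_nonneg y w
      have hv1 : v ≤ 1 := cdf_le_one y w
      have e1 : max l 1 = 1 := max_eq_right (by linarith)
      have e2 : max l 0 = l := max_eq_left h0l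
      simp only [e1, e2]
      rw [min_eq_left hv1, min_eq_right hlv]
      rw [hv, cdf_eq_cdfLt_add y w, hl]
      ring
    · rw [if_neg hw]
      exact (Finsupp.notMem_support_iff.mp hw).symm

end StmtNineAux
namespace StmtNineAux
open MeasureTheory

lemma toReal_ofReal_max (z : ℝ) : (ENNReal.ofReal z).toReal = max 0 z := by
  rcases le_total 0 z with h | h
  · rw [ENNReal.toReal_ofReal h, max_eq_right h]
  · rw [ENNReal.ofReal_eq_zero.mpr h, max_eq_left h]; simp

lemma dCDF_eq_como_sum (x y : Lottery) (u : ℝ → ℝ) :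
    Lottery.dCDF u x y = (como x y).sum (fun p v => v * |u p.1 - u p.2|) := by
  classical
  set P := x.f.support ×ˢ y.f.support with hP
  set I : ℝ × ℝ → Set ℝ := fun p =>
    Set.Ioc (max (cdfLt x p.1) (cdfLt y p.2)) (min (x.cdf p.1) (y.cdf p.2)) with hI
  set φ : ℝ → ℝ := fun q => |u (x.quantile q) - u (y.quantile q)| with hφ
  -- each I p for p ∈ P sits inside Ioc 0 1
  have hIsub : ∀ p, I p ⊆ Set.Ioc (0:ℝ) 1 := by
    intro p q hq
    rw [hI] at hq
    obtain ⟨hq1, hq2⟩ := hq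
    constructor
    · exact lt_of_le_of_lt (le_trans (cdfLt_nonneg x p.1) (le_max_left _ _)) hq1
    · exact le_trans hq2 (le_trans (min_le_left _ _) (cdf_le_one x p.1))
  -- union
  have hIunion : ⋃ p ∈ P, I p = Set.Ioc (0:ℝ) 1 := by
    apply Set.Subset.antisymm
    · intro q hq
      simp only [Set.mem_iUnion] at hq
      obtain ⟨p, _, hqp⟩ := hq
      exact hIsub p hqp
    · intro q hq
      obtain ⟨hq0, hq1⟩ := hq
      obtain ⟨a, ha, ha1, ha2⟩ := cover x hq0 hq1
      obtain ⟨b, hb, hb1, hb2⟩ := cover y hq0 hq1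
      simp only [Set.mem_iUnion]
      refine ⟨(a, b), ?_, ?_⟩
      · rw [hP, Finset.mem_product]; exact ⟨ha, hb⟩
      · rw [hI]
        exact ⟨max_lt ha1 hb1, le_min ha2 hb2⟩
  -- disjointness
  have hdisj : (↑P : Set (ℝ × ℝ)).Pairwise (Function.onFun Disjoint I) := by
    intro p hp p' hp' hne
    simp only [Function.onFun]
    rw [Set.disjoint_left]
    intro q hqp hqp'
    rw [hI] at hqp hqp'
    obtain ⟨hl, hr⟩ := hqp
    obtain ⟨hl', hr'⟩ := hqp'
    apply hne
    have hfst : p.1 = p'.1 := by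
      by_contra hne1
      rcases lt_or_gt_of_ne hne1 with h | h
      · have : x.cdf p.1 ≤ cdfLt x p'.1 := cdf_le_cdfLt x h
        have c1 : q ≤ x.cdf p.1 := le_trans hr (min_le_left _ _)
        have c2 : cdfLt x p'.1 < q := lt_of_le_of_lt (le_max_left _ _) hl'
        linarith
      · have : x.cdf p'.1 ≤ cdfLt x p.1 := cdf_le_cdfLt x h
        have c1 : q ≤ x.cdf p'.1 := le_trans hr' (min_le_left _ _)
        have c2 : cdfLt x p.1 < q := lt_of_le_of_lt (le_max_left _ _) hl
        linarith
    have hsnd : p.2 = p'.2 := by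
      by_contra hne2
      rcases lt_or_gt_of_ne hne2 with h | h
      · have : y.cdf p.2 ≤ cdfLt y p'.2 := cdf_le_cdfLt y h
        have c1 : q ≤ y.cdf p.2 := le_trans hr (min_le_right _ _)
        have c2 : cdfLt y p'.2 < q := lt_of_le_of_lt (le_max_right _ _) hl'
        linarith
      · have : y.cdf p'.2 ≤ cdfLt y p.2 := cdf_le_cdfLt y h
        have c1 : q ≤ y.cdf p'.2 := le_trans hr' (min_le_right _ _)
        have c2 : cdfLt y p.2 < q := lt_of_le_of_lt (le_max_right _ _) hl
        linarith
    exact Prod.ext hfst hsnd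
  -- φ equals constant on each piece
  have hEqOn : ∀ p ∈ P, Set.EqOn φ (fun _ => |u p.1 - u p.2|) (I p) := by
    intro p hp q hq
    rw [hP, Finset.mem_product] at hp
    rw [hI] at hq
    obtain ⟨hl, hr⟩ := hq
    have hx : x.quantile q = p.1 :=
      quantile_eq x hp.1 (lt_of_le_of_lt (le_max_left _ _) hl)
        (le_trans hr (min_le_left _ _))
    have hy : y.quantile q = p.2 :=
      quantile_eq y hp.2 (lt_of_le_of_lt (le_max_right _ _) hl)
        (le_trans hr (min_le_right _ _))
    rw [hφ]
    simp only [hx, hy]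
  have hmeas : ∀ p, MeasurableSet (I p) := fun p => measurableSet_Ioc
  have hint : ∀ p ∈ P, IntegrableOn φ (I p) := by
    intro p hp
    refine IntegrableOn.congr_fun ?_ (hEqOn p hp).symm (hmeas p)
    exact integrableOn_const measure_Ioc_lt_top.ne
  have hpiece : ∀ p ∈ P, ∫ q in I p, φ q = como x y p * |u p.1 - u p.2| := by
    intro p hp
    rw [setIntegral_congr_fun (hmeas p) (hEqOn p hp), setIntegral_const]
    rw [hI]
    simp only [Real.volume_real_Ioc, smul_eq_mul]
    rw [max_comm, como_apply]
  have hmain : Lottery.dCDF u x y = ∑ p ∈ P, como x y p * |u p.1 - u p.2| := by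
    rw [Lottery.dCDF, intervalIntegral.integral_of_le zero_le_one, ← hIunion,
      integral_biUnion_finset P (fun p _ => hmeas p) hdisj hint]
    exact Finset.sum_congr rfl hpiece
  rw [hmain]
  have hsupp : (como x y).support ⊆ P := Finsupp.support_onFinset_subset
  exact (Finsupp.sum_of_support_subset (como x y) hsupp
    (fun p v => v * |u p.1 - u p.2|) (fun p _ => by simp)).symm
end StmtNineAux
namespace StmtNineAux
open MeasureTheory

noncomputable def sp (u : ℝ → ℝ) (p : ℝ × ℝ) (t : ℝ) : ℝ :=
  (if u p.1 ≤ t then (1:ℝ) else 0) - (if u p.2 ≤ t then (1:ℝ) else 0)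

noncomputable def Gfun (u : ℝ → ℝ) (x : Lottery) (t : ℝ) : ℝ :=
  x.f.sum (fun w v => v * (if u w ≤ t then (1:ℝ) else 0))

lemma sp_eq_indicator (u : ℝ → ℝ) (p : ℝ × ℝ) (t : ℝ) :
    sp u p t = (Set.Ico (u p.1) (u p.2)).indicator (fun _ => (1:ℝ)) t
      - (Set.Ico (u p.2) (u p.1)).indicator (fun _ => (1:ℝ)) t := by
  rw [sp]
  rcases le_or_gt (u p.1) t with h1 | h1 <;> rcases le_or_gt (u p.2) t with h2 | h2
  · simp [Set.indicator_apply, Set.mem_Ico, h1, h2, not_lt.mpr h1, not_lt.mpr h2]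
  · simp [Set.indicator_apply, Set.mem_Ico, h1, h2, not_le.mpr h2, not_lt.mpr h1]
  · simp [Set.indicator_apply, Set.mem_Ico, h1, h2, not_le.mpr h1, not_lt.mpr h2]
  · simp [Set.indicator_apply, Set.mem_Ico, h1, h2, not_le.mpr h1, not_le.mpr h2]

lemma abs_sp_eq_indicator (u : ℝ → ℝ) (p : ℝ × ℝ) (t : ℝ) :
    |sp u p t| = (Set.Ico (min (u p.1) (u p.2)) (max (u p.1) (u p.2))).indicator
      (fun _ => (1:ℝ)) t := by
  rw [sp]
  rcases le_or_gt (u p.1) t with h1 | h1 <;> rcases le_or_gt (u p.2) t with h2 | h2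
  · simp [Set.indicator_apply, Set.mem_Ico, h1, h2, not_lt.mpr (max_le h1 h2)]
  · simp [Set.indicator_apply, Set.mem_Ico, h1, h2, not_le.mpr h2,
      le_trans (min_le_left _ _) h1, lt_of_lt_of_le h2 (le_max_right _ _)]
  · simp [Set.indicator_apply, Set.mem_Ico, h1, h2, not_le.mpr h1,
      le_trans (min_le_right _ _) h2, lt_of_lt_of_le h1 (le_max_left _ _)]
  · simp [Set.indicator_apply, Set.mem_Ico, h1, h2, not_le.mpr h1, not_le.mpr h2,
      not_le.mpr (lt_min h1 h2)]

lemma integrable_indicator_Ico (a b : ℝ) :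
    Integrable ((Set.Ico a b).indicator (fun _ => (1:ℝ))) := by
  rw [integrable_indicator_iff measurableSet_Ico]
  exact integrableOn_const measure_Ico_lt_top.ne

lemma integral_indicator_Ico (a b : ℝ) :
    ∫ t : ℝ, (Set.Ico a b).indicator (fun _ => (1:ℝ)) t = max 0 (b - a) := by
  rw [integral_indicator_const (1:ℝ) measurableSet_Ico, Real.volume_real_Ico, smul_eq_mul,
    mul_one, max_comm]

lemma integrable_sp (u : ℝ → ℝ) (p : ℝ × ℝ) : Integrable (sp u p) := by
  have : sp u p = fun t => (Set.Ico (u p.1) (u p.2)).indicator (fun _ => (1:ℝ)) t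
      - (Set.Ico (u p.2) (u p.1)).indicator (fun _ => (1:ℝ)) t :=
    funext (sp_eq_indicator u p)
  rw [this]
  exact (integrable_indicator_Ico _ _).sub (integrable_indicator_Ico _ _)

lemma integrable_abs_sp (u : ℝ → ℝ) (p : ℝ × ℝ) : Integrable (fun t => |sp u p t|) :=
  (integrable_sp u p).abs

lemma integral_abs_sp (u : ℝ → ℝ) (p : ℝ × ℝ) :
    ∫ t : ℝ, |sp u p t| = |u p.1 - u p.2| := by
  have : (fun t => |sp u p t|) = (Set.Ico (min (u p.1) (u p.2)) (max (u p.1) (u p.2))).indicator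
      (fun _ => (1:ℝ)) := funext (abs_sp_eq_indicator u p)
  rw [this, integral_indicator_Ico, max_sub_min_eq_abs' (u p.1) (u p.2)]
  exact max_eq_right (abs_nonneg _)

lemma sum_sp_eq (x y : Lottery) (u : ℝ → ℝ) {g : (ℝ × ℝ) →₀ ℝ} (hg : IsCoupling x y g)
    (t : ℝ) : ∑ p ∈ g.support, g p * sp u p t = Gfun u x t - Gfun u y t := by
  have hsplit : ∑ p ∈ g.support, g p * sp u p t
      = (∑ p ∈ g.support, g p * (if u p.1 ≤ t then (1:ℝ) else 0))
        - ∑ p ∈ g.support, g p * (if u p.2 ≤ t then (1:ℝ) else 0) := by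
    rw [← Finset.sum_sub_distrib]
    apply Finset.sum_congr rfl
    intro p _
    rw [sp]; ring
  rw [hsplit]
  have h1 := marginal_fst hg (fun w => if u w ≤ t then (1:ℝ) else 0)
  have h2 := marginal_snd hg (fun w => if u w ≤ t then (1:ℝ) else 0)
  rw [Finsupp.sum] at h1 h2
  rw [h1, h2, Gfun, Gfun]

lemma integrable_G_sub (x y : Lottery) (u : ℝ → ℝ) :
    Integrable (fun t => Gfun u x t - Gfun u y t) := by
  have hrep : (fun t => Gfun u x t - Gfun u y t)
      = fun t => ∑ p ∈ (como x y).support, como x y p * sp u p t :=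
    funext (fun t => (sum_sp_eq x y u (como_isCoupling x y) t).symm)
  rw [hrep]
  exact integrable_finset_sum _ (fun p _ => (integrable_sp u p).const_mul _)

lemma sign_sum {ι : Type*} {s : Finset ι} {c v : ι → ℝ} (hc : ∀ p ∈ s, 0 ≤ c p)
    (hs : ∀ p ∈ s, ∀ p' ∈ s, 0 < c p → 0 < c p' → ¬(0 < v p ∧ v p' < 0)) :
    |∑ p ∈ s, c p * v p| = ∑ p ∈ s, c p * |v p| := by
  by_cases hneg : ∃ p ∈ s, 0 < c p ∧ v p < 0
  · obtain ⟨p0, hp0, hcp0, hvp0⟩ := hneg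
    have hterm : ∀ p ∈ s, c p * v p = -(c p * |v p|) := by
      intro p hp
      rcases eq_or_lt_of_le (hc p hp) with hcp | hcp
      · rw [← hcp]; ring
      · have hvp : v p ≤ 0 := by
          by_contra hv
          push_neg at hv
          exact hs p hp p0 hp0 hcp hcp0 ⟨hv, hvp0⟩
        rw [abs_of_nonpos hvp]; ring
    have hflip : ∑ p ∈ s, c p * v p = -∑ p ∈ s, c p * |v p| := by
      rw [← Finset.sum_neg_distrib]
      exact Finset.sum_congr rfl hterm
    rw [hflip, abs_neg]
    apply abs_of_nonneg
    apply Finset.sum_nonneg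
    intro p hp
    exact mul_nonneg (hc p hp) (abs_nonneg _)
  · push_neg at hneg
    have hterm : ∀ p ∈ s, c p * v p = c p * |v p| := by
      intro p hp
      rcases eq_or_lt_of_le (hc p hp) with hcp | hcp
      · rw [← hcp]; ring
      · rw [abs_of_nonneg (hneg p hp hcp)]
    rw [Finset.sum_congr rfl hterm]
    apply abs_of_nonneg
    apply Finset.sum_nonneg
    intro p hp
    exact mul_nonneg (hc p hp) (abs_nonneg _)

end StmtNineAux
namespace StmtNineAux
open MeasureTheory

lemma sp_pos {u : ℝ → ℝ} {p : ℝ × ℝ} {t : ℝ} (h : 0 < sp u p t) :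
    u p.1 ≤ t ∧ t < u p.2 := by
  rw [sp] at h
  split_ifs at h with h1 h2 h2
  · norm_num at h
  · exact ⟨h1, not_le.mp h2⟩
  · norm_num at h
  · norm_num at h

lemma sp_neg {u : ℝ → ℝ} {p : ℝ × ℝ} {t : ℝ} (h : sp u p t < 0) :
    u p.2 ≤ t ∧ t < u p.1 := by
  rw [sp] at h
  split_ifs at h with h1 h2 h2
  · norm_num at h
  · norm_num at h
  · exact ⟨h2, not_le.mp h1⟩
  · norm_num at h

lemma como_pos_iff {x y : Lottery} {p : ℝ × ℝ} (h : 0 < como x y p) :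
    max (cdfLt x p.1) (cdfLt y p.2) < min (x.cdf p.1) (y.cdf p.2) := by
  rw [como_apply] at h
  rcases lt_max_iff.mp h with h' | h'
  · exact absurd h' (lt_irrefl 0)
  · linarith

lemma denom_ge (x y : Lottery) (u : ℝ → ℝ) {g : (ℝ × ℝ) →₀ ℝ} (hg : IsCoupling x y g) :
    ∫ t : ℝ, |Gfun u x t - Gfun u y t| ≤ g.sum fun p v => v * |u p.1 - u p.2| := by
  have hpos : ∀ p, 0 ≤ g p := fun p => (hg.1 p).1
  have hD : (g.sum fun p v => v * |u p.1 - u p.2|)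
      = ∫ t : ℝ, ∑ p ∈ g.support, g p * |sp u p t| := by
    rw [Finsupp.sum]
    rw [integral_finset_sum _ (fun p _ => (integrable_abs_sp u p).const_mul _)]
    apply Finset.sum_congr rfl
    intro p _
    rw [MeasureTheory.integral_const_mul, integral_abs_sp]
  rw [hD]
  apply integral_mono ((integrable_G_sub x y u).abs)
    (integrable_finset_sum _ (fun p _ => (integrable_abs_sp u p).const_mul _))
  intro t
  simp only
  rw [← sum_sp_eq x y u hg t]
  refine le_trans (Finset.abs_sum_le_sum_abs _ _) ?_
  apply Finset.sum_le_sum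
  intro p _
  rw [abs_mul, abs_of_nonneg (hpos p)]

lemma denom_como (x y : Lottery) (u : ℝ → ℝ) (hu : StrictMono u) :
    ((como x y).sum fun p v => v * |u p.1 - u p.2|)
      = ∫ t : ℝ, |Gfun u x t - Gfun u y t| := by
  have hsign : ∀ (t : ℝ), ∀ p ∈ (como x y).support, ∀ p' ∈ (como x y).support,
      0 < como x y p → 0 < como x y p' → ¬(0 < sp u p t ∧ sp u p' t < 0) := by
    intro t p _ p' _ hcp hcp' ⟨hs, hs'⟩
    obtain ⟨ha1, ha2⟩ := sp_pos hs
    obtain ⟨hb1, hb2⟩ := sp_neg hs'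
    have hp1 : p.1 < p'.1 := hu.lt_iff_lt.mp (lt_of_le_of_lt ha1 hb2)
    have hp2 : p'.2 < p.2 := hu.lt_iff_lt.mp (lt_of_le_of_lt hb1 ha2)
    have hx : x.cdf p.1 ≤ cdfLt x p'.1 := cdf_le_cdfLt x hp1
    have hy : y.cdf p'.2 ≤ cdfLt y p.2 := cdf_le_cdfLt y hp2
    have hz := como_pos_iff hcp
    have hz' := como_pos_iff hcp'
    have e1 : min (x.cdf p.1) (y.cdf p.2) ≤ x.cdf p.1 := min_le_left _ _
    have e2 : cdfLt x p'.1 ≤ max (cdfLt x p'.1) (cdfLt y p'.2) := le_max_left _ _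
    have e3 : min (x.cdf p'.1) (y.cdf p'.2) ≤ y.cdf p'.2 := min_le_right _ _
    have e4 : cdfLt y p.2 ≤ max (cdfLt x p.1) (cdfLt y p.2) := le_max_right _ _
    linarith
  have hpt : ∀ t : ℝ, ∑ p ∈ (como x y).support, como x y p * |sp u p t|
      = |Gfun u x t - Gfun u y t| := by
    intro t
    rw [← sum_sp_eq x y u (como_isCoupling x y) t]
    exact (sign_sum (fun p _ => como_nonneg x y p)
      (fun p hp p' hp' => hsign t p hp p' hp')).symm
  have hD : ((como x y).sum fun p v => v * |u p.1 - u p.2|)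
      = ∫ t : ℝ, ∑ p ∈ (como x y).support, como x y p * |sp u p t| := by
    rw [Finsupp.sum]
    rw [integral_finset_sum _ (fun p _ => (integrable_abs_sp u p).const_mul _)]
    apply Finset.sum_congr rfl
    intro p _
    rw [MeasureTheory.integral_const_mul, integral_abs_sp]
  rw [hD]
  congr 1
  exact funext hpt

lemma lottery_ext {x y : Lottery} (h : x.f = y.f) : x = y := by
  cases x; cases y; simpa using h

lemma dCDF_pos (x y : Lottery) (hxy : x ≠ y) (u : ℝ → ℝ) (hu : StrictMono u) :
    0 < Lottery.dCDF u x y := by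
  rw [dCDF_eq_como_sum x y u, Finsupp.sum]
  have hnn : ∀ p ∈ (como x y).support, 0 ≤ como x y p * |u p.1 - u p.2| :=
    fun p _ => mul_nonneg (como_nonneg x y p) (abs_nonneg _)
  rcases (Finset.sum_nonneg hnn).lt_or_eq with h | h
  · exact h
  -- if the sum is zero, every support pair is diagonal and then x = y
  exfalso
  have hdiag : ∀ p ∈ (como x y).support, p.1 = p.2 := by
    intro p hp
    have hterm := (Finset.sum_eq_zero_iff_of_nonneg hnn).mp h.symm p hp
    have hcpos : 0 < como x y p :=
      lt_of_le_of_ne (como_nonneg x y p) (Ne.symm (Finsupp.mem_support_iff.mp hp))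
    have habs : |u p.1 - u p.2| = 0 := by
      by_contra hab
      exact hab (by
        have := mul_eq_zero.mp hterm
        rcases this with h' | h'
        · exact absurd h' (ne_of_gt hcpos)
        · exact h')
    have := abs_eq_zero.mp habs
    exact hu.injective (by linarith)
  apply hxy
  apply lottery_ext
  ext w
  have hx := (como_isCoupling x y).2.1 w
  have hy := (como_isCoupling x y).2.2 w
  rw [Finsupp.sum] at hx hy
  rw [← hx, ← hy]
  apply Finset.sum_congr rfl
  intro p hp
  rw [hdiag p hp]

end StmtNineAux
/-- Proposition 7 — the maximal L1 ease of comparison over couplings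
of two lotteries is attained and equals the CDF-complexity value. -/
theorem stmt_9 (x y : Lottery) (hxy : x ≠ y) (u : ℝ → ℝ) (hu : StrictMono u)
    (H : ℝ → ℝ) (hHc : ContinuousOn H (Set.Icc 0 1))
    (hHm : StrictMonoOn H (Set.Icc 0 1)) (hH0 : H 0 = 0) :
    ∃ g : (ℝ × ℝ) →₀ ℝ, IsCoupling x y g ∧
      couplingVal H u g =
        H (|Lottery.EU u x - Lottery.EU u y| / Lottery.dCDF u x y) ∧
      ∀ g' : (ℝ × ℝ) →₀ ℝ, IsCoupling x y g' →
        couplingVal H u g' ≤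
          H (|Lottery.EU u x - Lottery.EU u y| / Lottery.dCDF u x y) := by
  classical
  open StmtNineAux in
  refine ⟨como x y, como_isCoupling x y, ?_, ?_⟩
  · rw [couplingVal, coupling_num (como_isCoupling x y) u, ← dCDF_eq_como_sum x y u]
  · intro g' hg'
    have hdpos : 0 < Lottery.dCDF u x y := dCDF_pos x y hxy u hu
    have hD'ge : Lottery.dCDF u x y ≤ g'.sum fun p v => v * |u p.1 - u p.2| := by
      calc Lottery.dCDF u x y
          = (como x y).sum fun p v => v * |u p.1 - u p.2| := dCDF_eq_como_sum x y u
        _ = ∫ t : ℝ, |Gfun u x t - Gfun u y t| := denom_como x y u hu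
        _ ≤ _ := denom_ge x y u hg'
    have hNle : |Lottery.EU u x - Lottery.EU u y| ≤ Lottery.dCDF u x y := by
      rw [dCDF_eq_como_sum x y u, ← coupling_num (como_isCoupling x y) u]
      exact num_le_denom (fun p => ((como_isCoupling x y).1 p).1) u
    rw [couplingVal, coupling_num hg' u]
    set N := |Lottery.EU u x - Lottery.EU u y| with hN
    set D' := g'.sum fun p v => v * |u p.1 - u p.2| with hD'
    have hD'pos : 0 < D' := lt_of_lt_of_le hdpos hD'ge
    have hle : N / D' ≤ N / Lottery.dCDF u x y :=
      div_le_div_of_nonneg_left (abs_nonneg _) hdpos hD'ge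
    have hr1 : N / Lottery.dCDF u x y ≤ 1 := (div_le_one hdpos).mpr hNle
    have hmem1 : N / D' ∈ Set.Icc (0:ℝ) 1 :=
      ⟨div_nonneg (abs_nonneg _) (le_of_lt hD'pos), le_trans hle hr1⟩
    have hmem2 : N / Lottery.dCDF u x y ∈ Set.Icc (0:ℝ) 1 :=
      ⟨div_nonneg (abs_nonneg _) (le_of_lt hdpos), hr1⟩
    exact hHm.monotoneOn hmem1 hmem2 hle
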